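/- For every nonzero x ∈ ℝ³, letting E = exp(hat(x)), one has vee(E − Eᵀ) = (2 sin ‖x‖ / ‖x‖) • x. In particular the vector vee(E − Eᵀ) points along the Euler axis x. -/

import Mathlib

open Matrix Real Nat

/-- The hat map sending `x ∈ ℝ³` to the skew-symmetric matrix with `hat x *ᵥ y = x ×₃ y`. -/
def hat (x : Fin 3 → ℝ) : Matrix (Fin 3) (Fin 3) ℝ :=
  !![0, -x 2, x 1; x 2, 0, -x 0; -x 1, x 0, 0]

/-- The vee map, inverse to `hat` on skew-symmetric matrices. -/
def vee (S : Matrix (Fin 3) (Fin 3) ℝ) : Fin 3 → ℝ :=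
  ![S 2 1, S 0 2, S 1 0]

/-- The Euclidean norm on ℝ³. -/
noncomputable def enorm3 (x : Fin 3 → ℝ) : ℝ := Real.sqrt (∑ i, x i ^ 2)

lemma hat_transpose (x : Fin 3 → ℝ) : (hat x)ᵀ = -(hat x) := by
  ext i j
  fin_cases i <;> fin_cases j <;> simp [hat]

lemma hat_cube (x : Fin 3 → ℝ) :
    hat x ^ 3 = (-(x 0 ^ 2 + x 1 ^ 2 + x 2 ^ 2)) • hat x := by
  ext i j
  fin_cases i <;> fin_cases j <;>
    simp [hat, pow_succ, Matrix.mul_apply, Fin.sum_univ_three] <;> ring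

lemma hat_odd_pow (x : Fin 3 → ℝ) (θ : ℝ) (hθ : θ ^ 2 = x 0 ^ 2 + x 1 ^ 2 + x 2 ^ 2)
    (m : ℕ) : hat x ^ (2 * m + 1) = ((-(θ ^ 2)) ^ m) • hat x := by
  induction m with
  | zero => simp
  | succ m ih =>
    have h3 : hat x ^ 3 = (-(θ ^ 2)) • hat x := by rw [hθ]; exact hat_cube x
    have : 2 * (m + 1) + 1 = (2 * m + 1) + 2 := by ring
    rw [this, pow_add, ih, smul_mul_assoc, ← pow_succ' (hat x) 2, h3, smul_smul,
      ← pow_succ]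

set_option maxHeartbeats 1000000 in
/-- For `E = exp (hat x)` with `x ≠ 0`, `vee (E - Eᵀ) = (2 sin ‖x‖ / ‖x‖) • x`:
the vector `vee (E - Eᵀ)` points along the Euler axis `x`. -/
theorem vee_exp_sub_transpose (x : Fin 3 → ℝ) (hx : x ≠ 0) :
    vee (NormedSpace.exp (hat x) - (NormedSpace.exp (hat x))ᵀ) =
      (2 * Real.sin (enorm3 x) / enorm3 x) • x := by
  set θ := enorm3 x with hθdef
  have hsum_nonneg : (0:ℝ) ≤ ∑ i, x i ^ 2 := Finset.sum_nonneg fun i _ => sq_nonneg _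
  have hθsq : θ ^ 2 = x 0 ^ 2 + x 1 ^ 2 + x 2 ^ 2 := by
    rw [hθdef, enorm3, Real.sq_sqrt hsum_nonneg, Fin.sum_univ_three]
  have hθpos : 0 < θ := by
    obtain ⟨i, hi⟩ := Function.ne_iff.mp hx
    exact Real.sqrt_pos.mpr (Finset.sum_pos' (fun j _ => sq_nonneg _)
      ⟨i, Finset.mem_univ i, pow_two_pos_of_ne_zero hi⟩)
  have hθne : θ ≠ 0 := ne_of_gt hθpos
  letI : SeminormedRing (Matrix (Fin 3) (Fin 3) ℝ) := Matrix.linftyOpSemiNormedRing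
  letI : NormedRing (Matrix (Fin 3) (Fin 3) ℝ) := Matrix.linftyOpNormedRing
  letI : NormedAlgebra ℝ (Matrix (Fin 3) (Fin 3) ℝ) := Matrix.linftyOpNormedAlgebra
  -- exponential as a sum
  have hs1 : HasSum (fun n : ℕ => ((n ! : ℝ)⁻¹) • hat x ^ n)
      (NormedSpace.exp (hat x)) := NormedSpace.exp_series_hasSum_exp' _
  have hs2 : HasSum (fun n : ℕ => ((n ! : ℝ)⁻¹) • (-hat x) ^ n)
      (NormedSpace.exp (-hat x)) := NormedSpace.exp_series_hasSum_exp' _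
  set f : ℕ → Matrix (Fin 3) (Fin 3) ℝ :=
    fun n => ((n ! : ℝ)⁻¹) • hat x ^ n - ((n ! : ℝ)⁻¹) • (-hat x) ^ n with hf
  have hdiff : HasSum f
      (NormedSpace.exp (hat x) - NormedSpace.exp (-hat x)) := hs1.sub hs2
  -- even terms vanish
  have heven : HasSum (fun k : ℕ => f (2 * k)) 0 := by
    have : (fun k : ℕ => f (2 * k)) = fun _ => 0 := by
      funext k
      simp only [hf]
      rw [Even.neg_pow (even_two_mul k), sub_self]
    rw [this]
    exact hasSum_zero
  -- odd terms
  have hodd : HasSum (fun k : ℕ => f (2 * k + 1))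
      ((2 * Real.sin θ / θ) • hat x) := by
    have hterm : ∀ k : ℕ, f (2 * k + 1)
        = ((2 / θ) * ((-1) ^ k * θ ^ (2 * k + 1) / ((2*k+1)! : ℝ))) • hat x := by
      intro k
      simp only [hf]
      rw [Odd.neg_pow ⟨k, by ring⟩, smul_neg, sub_neg_eq_add,
        hat_odd_pow x θ hθsq k, smul_smul, ← add_smul]
      congr 1
      have h1 : (-(θ ^ 2)) ^ k = (-1) ^ k * θ ^ (2 * k) := by
        rw [neg_pow, pow_mul]
      have h2 : θ ^ (2 * k + 1) = θ ^ (2 * k) * θ := by rw [pow_succ]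
      have h3 : ((2*k+1)! : ℝ) ≠ 0 := Nat.cast_ne_zero.mpr (Nat.factorial_ne_zero _)
      field_simp [h1, h2]
      ring
    have hsin := (Real.hasSum_sin θ).mul_left (2 / θ)
    have := hsin.smul_const (hat x)
    simp only [hterm]
    convert this using 2
    ring
  have htotal : HasSum f ((2 * Real.sin θ / θ) • hat x) := by
    have := heven.even_add_odd hodd
    rwa [zero_add] at this
  have hkey : NormedSpace.exp (hat x) - NormedSpace.exp (-hat x)
      = (2 * Real.sin θ / θ) • hat x := hdiff.unique htotal
  have htr : (NormedSpace.exp (hat x))ᵀ = NormedSpace.exp (-hat x) := by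
    rw [← Matrix.exp_transpose, hat_transpose]
  rw [htr, hkey]
  funext i
  fin_cases i <;>
    simp [vee, hat, Pi.smul_apply, smul_eq_mul]
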